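/- Let v : E → F be a φ-isometry that is φ-adjointable with φ-adjoint v*. Then vv* : F → F is a self-adjoint idempotent (i.e. an orthogonal projection onto the range of v), so that the range vE = vv*F is a complemented submodule of F with complement (id_F − vv*)F. -/

import Mathlib

open scoped RightActions InnerProductSpace

/-- The right Hilbert C⋆-module class as it stood in the older Mathlib (`CStarModule` there),
with a right action `SMul Aᵐᵒᵖ E`. -/
class RightCStarModule (A : outParam <| Type*) (E : Type*) [NonUnitalSemiring A] [StarRing A]
    [Module ℂ A] [AddCommGroup E] [Module ℂ E] [PartialOrder A] [SMul Aᵐᵒᵖ E] [Norm A] [Norm E]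
    extends Inner A E where
  inner_add_right {x} {y} {z} : inner x (y + z) = inner x y + inner x z
  inner_self_nonneg {x} : 0 ≤ inner x x
  inner_self {x} : inner x x = 0 ↔ x = 0
  inner_op_smul_right {a : A} {x y : E} : inner x (y <• a) = inner x y * a
  inner_smul_right_complex {z : ℂ} {x} {y} : inner x (z • y) = z • inner x y
  star_inner x y : star (inner x y) = inner y x
  norm_eq_sqrt_norm_inner_self x : ‖x‖ = √‖inner x x‖

/-- A *-homomorphism `φ : B → C` is nondegenerate if the closed linear span of `φ(B)·C`
is all of `C`. -/
def Nondegenerate {B C : Type*} [NonUnitalCStarAlgebra B] [NonUnitalCStarAlgebra C]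
    (φ : B →⋆ₙₐ[ℂ] C) : Prop :=
  closure (Submodule.span ℂ {c : C | ∃ b c₀, c = φ b * c₀} : Set C) = Set.univ

/-- The range ideal `B_E` of a Hilbert `B`-module `E`: the closed linear span of all
inner products `⟪x, y⟫`. -/
def rangeIdeal (B E : Type*) [NonUnitalCStarAlgebra B] [PartialOrder B] [StarOrderedRing B]
    [NormedAddCommGroup E] [NormedSpace ℂ E] [SMul Bᵐᵒᵖ E] [RightCStarModule B E] : Set B :=
  closure (Submodule.span ℂ {b : B | ∃ x y : E, b = ⟪x, y⟫_B} : Set B)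

variable {B C D E F G : Type*}
  [NonUnitalCStarAlgebra B] [PartialOrder B] [StarOrderedRing B]
  [NonUnitalCStarAlgebra C] [PartialOrder C] [StarOrderedRing C]
  [NonUnitalCStarAlgebra D] [PartialOrder D] [StarOrderedRing D]
  [NormedAddCommGroup E] [NormedSpace ℂ E] [SMul Bᵐᵒᵖ E] [RightCStarModule B E]
  [NormedAddCommGroup F] [NormedSpace ℂ F] [SMul Cᵐᵒᵖ F] [RightCStarModule C F]
  [NormedAddCommGroup G] [NormedSpace ℂ G] [SMul Dᵐᵒᵖ G] [RightCStarModule D G]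

theorem RightCStarModule.inner_sub_right' (x y z : F) : ⟪x, y - z⟫_C = ⟪x, y⟫_C - ⟪x, z⟫_C := by
  have := RightCStarModule.inner_add_right (A := C) (x := x) (y := y - z) (z := z)
  rw [sub_add_cancel] at this
  exact eq_sub_of_add_eq this.symm

theorem RightCStarModule.inner_sub_left' (x y z : F) : ⟪y - z, x⟫_C = ⟪y, x⟫_C - ⟪z, x⟫_C := by
  rw [← RightCStarModule.star_inner x (y - z), RightCStarModule.inner_sub_right', star_sub,
    RightCStarModule.star_inner, RightCStarModule.star_inner]

/-- For an adjointable φ-isometry v, the operator v v* is a self-adjoint idempotent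
projecting onto the range of v, so the range of v is complemented. -/
theorem phi_isometry_adjoint_projection (φ : B →⋆ₙₐ[ℂ] C) (hφ : Nondegenerate φ)
    (v : E → F) (vs : F → E)
    (hiso : ∀ x y : E, ⟪v x, v y⟫_C = φ ⟪x, y⟫_B)
    (hadj : ∀ (x : E) (y : F), ⟪v x, y⟫_C = φ ⟪x, vs y⟫_B) :
    (∀ y : F, v (vs (v (vs y))) = v (vs y)) ∧
    (∀ x y : F, ⟪v (vs x), y⟫_C = ⟪x, v (vs y)⟫_C) ∧
    (Set.range (fun y : F => v (vs y)) = Set.range v) ∧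
    (∀ x y : F, ⟪v (vs x), y - v (vs y)⟫_C = 0) := by
  -- key: ⟪p x, p z⟫ = ⟪p x, z⟫
  have key : ∀ x z : F, ⟪v (vs x), v (vs z)⟫_C = ⟪v (vs x), z⟫_C := fun x z => by
    rw [hiso, hadj]
  have eq_of_inner : ∀ a b : F, ⟪a - b, a - b⟫_C = 0 → a = b := by
    intro a b h
    have : ‖a - b‖ = 0 := by
      rw [RightCStarModule.norm_eq_sqrt_norm_inner_self (A := C), h]; simp
    rwa [norm_eq_zero, sub_eq_zero] at this
  have fix : ∀ x : F, v (vs (v (vs x))) = v (vs x) := by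
    intro x
    apply eq_of_inner
    have h1 : ⟪v (vs (v (vs x))), v (vs (v (vs x)))⟫_C = ⟪v (vs (v (vs x))), v (vs x)⟫_C :=
      key _ _
    have h2 : ⟪v (vs x), v (vs (v (vs x)))⟫_C = ⟪v (vs x), v (vs x)⟫_C :=
      key x (v (vs x))
    simp only [RightCStarModule.inner_sub_left', RightCStarModule.inner_sub_right', h1, h2]
    abel
  have selfadj : ∀ x y : F, ⟪v (vs x), y⟫_C = ⟪x, v (vs y)⟫_C := by
    intro x y
    rw [hadj, ← RightCStarModule.star_inner (v (vs y)) x, hadj, ← map_star, RightCStarModule.star_inner]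
  refine ⟨fix, selfadj, ?_, ?_⟩
  · ext z
    constructor
    · rintro ⟨y, rfl⟩; exact ⟨vs y, rfl⟩
    · rintro ⟨x, rfl⟩
      refine ⟨v x, ?_⟩
      apply eq_of_inner
      have h0 : ⟪v x, v (vs (v x))⟫_C = ⟪v x, v x⟫_C := by
        rw [hiso, ← hadj]
      have h1 : ⟪v (vs (v x)), v (vs (v x))⟫_C = ⟪v (vs (v x)), v x⟫_C := key _ _
      have h2 : ⟪v (vs (v x)), v x⟫_C = ⟪v x, v x⟫_C := by
        rw [← RightCStarModule.star_inner, h0, RightCStarModule.star_inner]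
      simp only [RightCStarModule.inner_sub_left', RightCStarModule.inner_sub_right', h0, h1, h2]
      abel
  · intro x y
    rw [RightCStarModule.inner_sub_right', key, sub_self]
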